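/- Let 0 < β < 1, let Q be a cube of side length l(Q) in ℝⁿ, and let R_j = {z : 2^j l(Q) ≤ |z - x| ≤ 2^{j+1} l(Q)} for a fixed x ∈ ℝⁿ. For any C¹ function g supported in (3/2)R_j with ‖g‖_∞ ≤ A (2^j l(Q))^{-m} and ‖∇g‖_∞ ≤ A (2^j l(Q))^{-m-1} for some integer 0 ≤ m ≤ n, one has ∫_{(2R_j)^c} |(g * |z|^{-(n+1-β)})(y)| dy ≤ C A (2^j l(Q))^{n - m - 1 + β}, where C = C(n, β). -/

import Mathlib

open MeasureTheory Metric Filter Topology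

noncomputable section

/-- The axis-parallel cube with center `c` and side length `l`. -/
def cube (n : ℕ) (c : EuclideanSpace ℝ (Fin n)) (l : ℝ) : Set (EuclideanSpace ℝ (Fin n)) :=
  {x | ∀ i, |x i - c i| ≤ l / 2}

/-- The i-th component of the α-Riesz kernel. -/
def K (n : ℕ) (α : ℝ) (i : Fin n) (x : EuclideanSpace ℝ (Fin n)) : ℝ :=
  x i / ‖x‖ ^ (1 + α)

/-- Partial derivative in direction i. -/
def pd {n : ℕ} (i : Fin n) (f : EuclideanSpace ℝ (Fin n) → ℝ) :
    EuclideanSpace ℝ (Fin n) → ℝ :=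
  fun x => fderiv ℝ f x (EuclideanSpace.single i 1)

/-- Multi-index partial derivative ∂^s. -/
def mderiv {n : ℕ} (s : Fin n → ℕ) (f : EuclideanSpace ℝ (Fin n) → ℝ) :
    EuclideanSpace ℝ (Fin n) → ℝ :=
  (List.finRange n).foldr (fun i g => (pd i)^[s i] g) f

/-- Order |s| of a multi-index. -/
def deg {n : ℕ} (s : Fin n → ℕ) : ℕ := ∑ i, s i
/-- The closed annulus centered at `x` with radii `r ≤ R`. -/
def annulus (n : ℕ) (x : EuclideanSpace ℝ (Fin n)) (r R : ℝ) :
    Set (EuclideanSpace ℝ (Fin n)) :=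
  {z | r ≤ ‖z - x‖ ∧ ‖z - x‖ ≤ R}

/-- Tail estimate for the convolution of a function supported on the dyadic
annulus R_j with the kernel |z|^{-(n+1-β)}, outside the doubled annulus. -/
theorem annulus_convolution_tail_estimate (n : ℕ) (β : ℝ) (hn : 0 < n)
    (hβ : 0 < β) (hβ1 : β < 1) :
    ∃ C > (0:ℝ), ∀ (x : EuclideanSpace ℝ (Fin n)) (l : ℝ), 0 < l →
      ∀ (j : ℤ) (m : ℕ), m ≤ n → ∀ A : ℝ, 0 ≤ A →
      ∀ g : EuclideanSpace ℝ (Fin n) → ℝ, ContDiff ℝ 1 g →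
      tsupport g ⊆ annulus n x ((2/3) * ((2:ℝ)^j * l)) ((3/2) * ((2:ℝ)^(j+1) * l)) →
      (∀ z, |g z| ≤ A * ((2:ℝ)^j * l) ^ (-(m:ℝ))) →
      (∀ z, ‖fderiv ℝ g z‖ ≤ A * ((2:ℝ)^j * l) ^ (-((m:ℝ) + 1))) →
      ∫ y in (annulus n x ((1/2) * ((2:ℝ)^j * l)) (2 * ((2:ℝ)^(j+1) * l)))ᶜ,
          |∫ z, g z * ‖y - z‖ ^ (-((n:ℝ) + 1 - β))| ≤
        C * A * ((2:ℝ)^j * l) ^ ((n:ℝ) - m - 1 + β) := by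
  set p : ℝ := (n : ℝ) + 1 - β with hpdef
  have hp0 : 0 < p := by
    have : (0:ℝ) ≤ n := Nat.cast_nonneg n
    simp only [hpdef]; linarith
  have hpn : (Module.finrank ℝ (EuclideanSpace ℝ (Fin n)) : ℝ) < p := by
    rw [finrank_euclideanSpace_fin]
    simp only [hpdef]; linarith
  have hI : Integrable (fun w : EuclideanSpace ℝ (Fin n) => (1 + ‖w‖) ^ (-p)) :=
    integrable_one_add_norm hpn
  set κ : ℝ := (volume (closedBall (0 : EuclideanSpace ℝ (Fin n)) 1)).toReal with hκdef
  set I : ℝ := ∫ w : EuclideanSpace ℝ (Fin n), (1 + ‖w‖) ^ (-p) with hIdef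
  have hκ0 : 0 ≤ κ := ENNReal.toReal_nonneg
  have hI0 : 0 ≤ I := integral_nonneg fun w => Real.rpow_nonneg (by positivity) _
  refine ⟨(9:ℝ)^p * 3^n * κ * I + 1, by positivity, ?_⟩
  intro x l hl j m hm A hA g hg hsupp hbound hgrad
  set r : ℝ := (2:ℝ)^j * l with hrdef
  have hr : 0 < r := mul_pos (zpow_pos (by norm_num) j) hl
  have h2 : (2:ℝ)^(j+1) * l = 2 * r := by
    rw [hrdef, zpow_add_one₀ (two_ne_zero)]; ring
  rw [h2] at hsupp ⊢
  rw [show (3/2 : ℝ) * (2*r) = 3*r by ring] at hsupp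
  rw [show (2 : ℝ) * (2*r) = 4*r by ring]
  set S := annulus n x ((1/2) * r) (4*r) with hSdef
  -- support in closed ball
  have hsub : tsupport g ⊆ closedBall x (3*r) := by
    intro z hz
    have := (hsupp hz).2
    rw [mem_closedBall, dist_eq_norm]
    exact this
  -- pointwise bound on the inner integral
  have hpoint : ∀ y ∈ Sᶜ,
      |∫ z, g z * ‖y - z‖ ^ (-((n:ℝ) + 1 - β))| ≤
        (A * r ^ (-(m:ℝ)) * ((3*r)^n * κ) * 9^p) * (‖y - x‖ + r) ^ (-p) := by
    intro y hy
    have hyx : ‖y - x‖ < (1/2)*r ∨ 4*r < ‖y - x‖ := by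
      by_contra hcon
      push_neg at hcon
      exact hy ⟨hcon.1, hcon.2⟩
    have hq0 : 0 < (‖y - x‖ + r)/9 := by positivity
    have hdz : ∀ z ∈ tsupport g, (‖y - x‖ + r)/9 ≤ ‖y - z‖ := by
      intro z hz
      obtain ⟨h1, h2'⟩ := hsupp hz
      have ht1 : ‖z - x‖ - ‖y - x‖ ≤ ‖y - z‖ := by
        have h := norm_sub_norm_le (z - x) (y - x)
        rw [show (z - x) - (y - x) = z - y by abel, norm_sub_rev z y] at h
        linarith
      have ht2 : ‖y - x‖ - ‖z - x‖ ≤ ‖y - z‖ := by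
        have h := norm_sub_norm_le (y - x) (z - x)
        rw [show (y - x) - (z - x) = y - z by abel] at h
        linarith
      rcases hyx with hc | hc
      · linarith
      · linarith
    set M : ℝ := A * r ^ (-(m:ℝ)) * ((‖y - x‖ + r)/9) ^ (-p) with hMdef
    have hM0 : 0 ≤ M := by positivity
    have hbd : ∀ z, ‖g z * ‖y - z‖ ^ (-((n:ℝ) + 1 - β))‖ ≤
        Set.indicator (closedBall x (3*r)) (fun _ => M) z := by
      intro z
      by_cases hz : z ∈ tsupport g
      · rw [Set.indicator_of_mem (hsub hz), norm_mul, Real.norm_eq_abs, Real.norm_eq_abs,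
          abs_of_nonneg (Real.rpow_nonneg (norm_nonneg _) _)]
        have h1 := hbound z
        have h2' : ‖y - z‖ ^ (-p) ≤ ((‖y - x‖ + r)/9) ^ (-p) :=
          Real.rpow_le_rpow_of_nonpos hq0 (hdz z hz) (neg_nonpos.mpr hp0.le)
        calc |g z| * ‖y - z‖ ^ (-((n:ℝ) + 1 - β))
            = |g z| * ‖y - z‖ ^ (-p) := by rw [hpdef]
          _ ≤ (A * r ^ (-(m:ℝ))) * (((‖y - x‖ + r)/9) ^ (-p)) :=
              mul_le_mul h1 h2' (Real.rpow_nonneg (norm_nonneg _) _) (by positivity)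
          _ = M := by rw [hMdef]
      · rw [image_eq_zero_of_notMem_tsupport hz, zero_mul, norm_zero]
        exact Set.indicator_nonneg (fun _ _ => hM0) z
    have hint_ind : Integrable (Set.indicator (closedBall x (3*r)) (fun _ => M)) :=
      (integrable_indicator_iff measurableSet_closedBall).2
        (integrableOn_const measure_closedBall_lt_top.ne)
    have hle := norm_integral_le_of_norm_le hint_ind (Filter.Eventually.of_forall hbd)
    rw [Real.norm_eq_abs] at hle
    have hvol : ∫ z : EuclideanSpace ℝ (Fin n), Set.indicator (closedBall x (3*r)) (fun _ => M) z
        = ((3*r)^n * κ) * M := by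
      rw [integral_indicator_const M measurableSet_closedBall, measureReal_def,
        Measure.addHaar_closedBall' volume x (by positivity : (0:ℝ) ≤ 3*r),
        finrank_euclideanSpace_fin, ENNReal.toReal_mul,
        ENNReal.toReal_ofReal (by positivity : (0:ℝ) ≤ (3*r)^n)]
      rw [smul_eq_mul, hκdef]
    have hMeq : M = A * r ^ (-(m:ℝ)) * (9^p * (‖y - x‖ + r) ^ (-p)) := by
      rw [hMdef, Real.div_rpow (by positivity) (by norm_num : (0:ℝ) ≤ 9),
        Real.rpow_neg (by norm_num : (0:ℝ) ≤ 9), div_eq_mul_inv, inv_inv]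
      ring
    calc |∫ z, g z * ‖y - z‖ ^ (-((n:ℝ) + 1 - β))|
        ≤ ∫ z : EuclideanSpace ℝ (Fin n),
            Set.indicator (closedBall x (3*r)) (fun _ => M) z := hle
      _ = ((3*r)^n * κ) * M := hvol
      _ = (A * r ^ (-(m:ℝ)) * ((3*r)^n * κ) * 9^p) * (‖y - x‖ + r) ^ (-p) := by
          rw [hMeq]; ring
  -- integrability and value of the majorant
  have hcompeq : ∀ w : EuclideanSpace ℝ (Fin n),
      (‖r • w‖ + r) ^ (-p) = r ^ (-p) * (1 + ‖w‖) ^ (-p) := by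
    intro w
    rw [norm_smul, Real.norm_eq_abs, abs_of_pos hr,
      show r * ‖w‖ + r = r * (1 + ‖w‖) by ring,
      Real.mul_rpow hr.le (by positivity)]
  have hq1 : Integrable (fun w : EuclideanSpace ℝ (Fin n) => (‖w‖ + r) ^ (-p)) := by
    have h2' : Integrable (fun w : EuclideanSpace ℝ (Fin n) => (‖r • w‖ + r) ^ (-p)) := by
      simp only [hcompeq]
      exact hI.const_mul _
    exact (integrable_comp_smul_iff volume
      (fun w : EuclideanSpace ℝ (Fin n) => (‖w‖ + r) ^ (-p)) hr.ne').1 h2'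
  have hq : Integrable (fun y : EuclideanSpace ℝ (Fin n) => (‖y - x‖ + r) ^ (-p)) :=
    hq1.comp_sub_right x
  have hval : ∫ y : EuclideanSpace ℝ (Fin n), (‖y - x‖ + r) ^ (-p)
      = r ^ (n:ℝ) * (r ^ (-p) * I) := by
    rw [integral_sub_right_eq_self
      (fun y : EuclideanSpace ℝ (Fin n) => (‖y‖ + r) ^ (-p)) x]
    have hs := Measure.integral_comp_smul_of_nonneg
      (volume : Measure (EuclideanSpace ℝ (Fin n)))
      (fun v : EuclideanSpace ℝ (Fin n) => (‖v‖ + r) ^ (-p)) r (hR := hr.le)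
    simp only [hcompeq, finrank_euclideanSpace_fin, integral_const_mul, smul_eq_mul] at hs
    have hrn : (r:ℝ) ^ n ≠ 0 := (pow_pos hr n).ne'
    field_simp at hs
    rw [Real.rpow_natCast r n, hIdef, ← hs]
    ring
  set c : ℝ := A * r ^ (-(m:ℝ)) * ((3*r)^n * κ) * 9^p with hcdef
  have hc0 : 0 ≤ c := by positivity
  have hB : Integrable (fun y : EuclideanSpace ℝ (Fin n) => c * (‖y - x‖ + r) ^ (-p)) :=
    hq.const_mul c
  have hSm : MeasurableSet S := by
    have : S = (fun z : EuclideanSpace ℝ (Fin n) => ‖z - x‖) ⁻¹' (Set.Icc ((1/2)*r) (4*r)) := rfl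
    rw [this]
    exact (((continuous_id.sub continuous_const).norm).measurable) measurableSet_Icc
  have step1 : ∫ y in Sᶜ, |∫ z, g z * ‖y - z‖ ^ (-((n:ℝ) + 1 - β))| ≤
      ∫ y in Sᶜ, c * (‖y - x‖ + r) ^ (-p) := by
    refine integral_mono_of_nonneg (Filter.Eventually.of_forall fun y => abs_nonneg _)
      (hB.restrict) ?_
    exact (ae_restrict_mem hSm.compl).mono hpoint
  have step2 : ∫ y in Sᶜ, c * (‖y - x‖ + r) ^ (-p) ≤
      ∫ y : EuclideanSpace ℝ (Fin n), c * (‖y - x‖ + r) ^ (-p) :=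
    setIntegral_le_integral hB (Filter.Eventually.of_forall fun y => by positivity)
  have step3 : ∫ y : EuclideanSpace ℝ (Fin n), c * (‖y - x‖ + r) ^ (-p)
      = c * (r ^ (n:ℝ) * (r ^ (-p) * I)) := by
    rw [integral_const_mul, hval]
  -- final arithmetic
  have hfinal : c * (r ^ (n:ℝ) * (r ^ (-p) * I)) =
      ((9:ℝ)^p * 3^n * κ * I) * A * r ^ ((n:ℝ) - m - 1 + β) := by
    have hrpow : r ^ (-(m:ℝ)) * r ^ ((n:ℝ)) * r ^ ((n:ℝ)) * r ^ (-p) =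
        r ^ ((n:ℝ) - m - 1 + β) := by
      rw [← Real.rpow_add hr, ← Real.rpow_add hr, ← Real.rpow_add hr]
      congr 1
      rw [hpdef]; ring
    rw [hcdef, mul_pow, ← Real.rpow_natCast r n, ← hrpow]
    ring
  have hX : 0 ≤ A * r ^ ((n:ℝ) - m - 1 + β) :=
    mul_nonneg hA (Real.rpow_nonneg hr.le _)
  calc ∫ y in Sᶜ, |∫ z, g z * ‖y - z‖ ^ (-((n:ℝ) + 1 - β))|
      ≤ c * (r ^ (n:ℝ) * (r ^ (-p) * I)) :=
        le_trans step1 (le_trans step2 (le_of_eq step3))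
    _ = ((9:ℝ)^p * 3^n * κ * I) * A * r ^ ((n:ℝ) - m - 1 + β) := hfinal
    _ ≤ ((9:ℝ)^p * 3^n * κ * I + 1) * A * r ^ ((n:ℝ) - m - 1 + β) := by
        have h9 : (0:ℝ) ≤ (9:ℝ)^p * 3^n * κ * I := by positivity
        nlinarith [hX]
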